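/- If f holomorphic on ℍ satisfies f|_α w_N = ε f with ε ∈ {±1} and decays exponentially at i∞ and 0, then Λ(s,f) = (-1)^{s-α} N^{α/2-s} ε Λ(α-s, f), where Λ(s,f) = ∫_{i∞}^0 f(z) z^{s-1} dz. -/

import Mathlib

open Complex MeasureTheory Set Real

lemma aux_cpow_pos_mul_I {r : ℝ} (hr : 0 < r) (c : ℂ) :
    ((r:ℂ) * Complex.I) ^ c
      = Complex.exp (((Real.log r : ℂ) + (Real.pi/2 : ℝ) * Complex.I) * c) := by
  rw [Complex.cpow_def_of_ne_zero
      (mul_ne_zero (Complex.ofReal_ne_zero.mpr hr.ne') Complex.I_ne_zero),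
    Complex.log_ofReal_mul hr Complex.I_ne_zero, Complex.log_I]
  push_cast
  ring_nf

lemma aux_zpow_pos_mul_I {r : ℝ} (hr : 0 < r) (n : ℤ) :
    ((r:ℂ) * Complex.I) ^ n
      = Complex.exp (((Real.log r : ℂ) + (Real.pi/2 : ℝ) * Complex.I) * n) := by
  rw [← aux_cpow_pos_mul_I hr, Complex.cpow_intCast]

lemma aux_cpow_nat {N : ℕ} (hN : 0 < N) (c : ℂ) :
    (N:ℂ) ^ c = Complex.exp ((Real.log N : ℂ) * c) := by
  rw [Complex.cpow_def_of_ne_zero (Nat.cast_ne_zero.mpr hN.ne'), Complex.natCast_log]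

lemma aux_exp_log_nat {N : ℕ} (hN : 0 < N) :
    Complex.exp ((Real.log N : ℂ)) = (N:ℂ) := by
  rw [← Complex.ofReal_exp, Real.exp_log (by exact_mod_cast hN)]
  norm_cast


lemma aux_neg_one_div_mul_I (x : ℂ) (hx : x ≠ 0) : -1 / (x * Complex.I) = x⁻¹ * Complex.I := by
  rw [div_eq_iff (mul_ne_zero hx Complex.I_ne_zero)]
  have : Complex.I * Complex.I = -1 := Complex.I_mul_I
  field_simp
  linear_combination -this

lemma aux_odd_vanish (N : ℕ) (hN : 0 < N) (α : ℤ) (hodd : Odd α) (ε : ℂ) (hε : ε = 1 ∨ ε = -1)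
    (f : ℂ → ℂ)
    (heigen : ∀ z : ℂ, 0 < z.im →
      ((N : ℂ)) ^ ((α : ℂ) / 2) * ((N : ℂ) * z) ^ (-α) * f (-1 / ((N : ℂ) * z)) = ε * f z)
    {u : ℝ} (hu : 0 < u) : f ((u:ℂ) * Complex.I) = 0 := by
  have hNR : (0:ℝ) < (N:ℝ) := Nat.cast_pos.mpr hN
  have hNC : ((N:ℂ)) ≠ 0 := Nat.cast_ne_zero.mpr hN.ne'
  have huC : ((u:ℂ)) ≠ 0 := Complex.ofReal_ne_zero.mpr hu.ne'
  set z : ℂ := (u:ℂ) * Complex.I with hzdef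
  set w : ℂ := ((((N:ℝ)*u)⁻¹ : ℝ) : ℂ) * Complex.I with hwdef
  have hz : 0 < z.im := by simp [hzdef, hu]
  have hw : 0 < w.im := by simp [hwdef]; positivity
  have h1 := heigen z hz
  have h2 := heigen w hw
  have e1 : -1 / ((N:ℂ)*z) = w := by
    have h := aux_neg_one_div_mul_I ((N:ℂ)*(u:ℂ)) (mul_ne_zero hNC huC)
    simp only [hzdef, hwdef]
    push_cast
    rw [← mul_assoc, h]
  have e2 : -1 / ((N:ℂ)*w) = z := by
    have h := aux_neg_one_div_mul_I ((u:ℂ))⁻¹ (inv_ne_zero huC)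
    simp only [hzdef, hwdef]
    push_cast
    rw [← mul_assoc]
    have h3 : (N:ℂ) * ((N:ℂ)*(u:ℂ))⁻¹ = ((u:ℂ))⁻¹ := by
      field_simp
    rw [h3, h, inv_inv]
  rw [e1] at h1
  rw [e2] at h2
  have hfw : f w = ε * (((N:ℂ)) ^ ((α : ℂ) / 2) * ((N : ℂ) * w) ^ (-α) * f z) := by
    rcases hε with rfl | rfl
    · linear_combination -h2
    · linear_combination h2
  rw [hfw] at h1
  have hNz : (N:ℂ) * z ≠ 0 := mul_ne_zero hNC (mul_ne_zero huC Complex.I_ne_zero)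
  have key : (((N:ℂ)) ^ ((α : ℂ) / 2) * ((N:ℂ)) ^ ((α : ℂ) / 2)) *
      ((((N:ℂ)*z) * ((N:ℂ)*w)) ^ (-α)) * f z = f z := by
    rw [mul_zpow]
    rcases hε with rfl | rfl
    · linear_combination h1
    · linear_combination -h1
  have hprod : ((N:ℂ)*z) * ((N:ℂ)*w) = -(N:ℂ) := by
    simp only [hzdef, hwdef]
    push_cast
    field_simp
    linear_combination Complex.I_mul_I
  have hhalf : ((N:ℂ)) ^ ((α : ℂ) / 2) * ((N:ℂ)) ^ ((α : ℂ) / 2) = ((N:ℂ)) ^ α := by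
    rw [← Complex.cpow_add _ _ hNC]
    norm_num
  rw [hprod, hhalf] at key
  have hneg : (-(N:ℂ)) ^ (-α) = -(((N:ℂ)) ^ (-α)) := by
    rw [show (-(N:ℂ)) = (-1) * (N:ℂ) by ring, mul_zpow, (hodd.neg).neg_one_zpow]
    ring
  rw [hneg] at key
  have hcancel : ((N:ℂ)) ^ α * (((N:ℂ)) ^ (-α)) = 1 := by
    rw [zpow_neg]
    exact mul_inv_cancel₀ (zpow_ne_zero _ hNC)
  have h2f : (2:ℂ) * f z = 0 := by linear_combination -key - f z * hcancel
  exact (mul_eq_zero.mp h2f).resolve_left two_ne_zero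

lemma aux_exp_log_real {u : ℝ} (hu : 0 < u) :
    Complex.exp ((Real.log u : ℂ)) = (u:ℂ) := by
  rw [← Complex.ofReal_exp, Real.exp_log hu]

lemma aux_key (N : ℕ) (hN : 0 < N) (α : ℤ) (ε : ℂ) (hε : ε = 1 ∨ ε = -1)
    (f : ℂ → ℂ)
    (heigen : ∀ z : ℂ, 0 < z.im →
      ((N : ℂ)) ^ ((α : ℂ) / 2) * ((N : ℂ) * z) ^ (-α) * f (-1 / ((N : ℂ) * z)) = ε * f z)
    (s : ℂ) {u : ℝ} (hu : 0 < u) :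
    ((N:ℝ)) • (((((N:ℝ)*u)^2)⁻¹) • (f (((((N:ℝ)*u)⁻¹ : ℝ) : ℂ) * Complex.I) *
        (((((N:ℝ)*u)⁻¹ : ℝ) : ℂ) * Complex.I) ^ (s-1) * Complex.I))
    = Complex.exp (Real.pi * Complex.I * (s - α)) * ((N : ℂ)) ^ ((α : ℂ) / 2 - s) * ε *
        (f ((u:ℂ) * Complex.I) * ((u:ℂ) * Complex.I) ^ ((α : ℂ) - s - 1) * Complex.I) := by
  have hNR : (0:ℝ) < (N:ℝ) := Nat.cast_pos.mpr hN
  have hNu : (0:ℝ) < (N:ℝ)*u := by positivity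
  have hNC : ((N:ℂ)) ≠ 0 := Nat.cast_ne_zero.mpr hN.ne'
  have huC : ((u:ℂ)) ≠ 0 := Complex.ofReal_ne_zero.mpr hu.ne'
  have e1 : -1 / ((N:ℂ) * ((u:ℂ) * Complex.I)) = ((((N:ℝ)*u)⁻¹ : ℝ) : ℂ) * Complex.I := by
    have h := aux_neg_one_div_mul_I ((N:ℂ)*(u:ℂ)) (mul_ne_zero hNC huC)
    rw [show ((((N:ℝ)*u)⁻¹ : ℝ) : ℂ) = ((N:ℂ)*(u:ℂ))⁻¹ by push_cast; ring, ← mul_assoc, h]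
  have h1 := heigen ((u:ℂ) * Complex.I) (by simp [hu])
  rw [e1] at h1
  have hB : ((N:ℂ)*((u:ℂ)*Complex.I)) ≠ 0 :=
    mul_ne_zero hNC (mul_ne_zero huC Complex.I_ne_zero)
  have hA : ((N:ℂ))^((α:ℂ)/2) ≠ 0 := by
    rw [aux_cpow_nat hN]; exact Complex.exp_ne_zero _
  have hfval : f (((((N:ℝ)*u)⁻¹ : ℝ) : ℂ) * Complex.I)
      = ε * f ((u:ℂ)*Complex.I) * (((N:ℂ))^((α:ℂ)/2))⁻¹ *
        (((N:ℂ)*((u:ℂ)*Complex.I))^α) := by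
    apply mul_left_cancel₀
      (mul_ne_zero hA (zpow_ne_zero (-α) hB) :
        ((N:ℂ))^((α:ℂ)/2) * ((N:ℂ)*((u:ℂ)*Complex.I))^(-α) ≠ 0)
    rw [h1]
    have eA : ((N:ℂ))^((α:ℂ)/2) * (((N:ℂ))^((α:ℂ)/2))⁻¹ = 1 := mul_inv_cancel₀ hA
    have eB : ((N:ℂ)*((u:ℂ)*Complex.I))^(-α) * ((N:ℂ)*((u:ℂ)*Complex.I))^α = 1 := by
      rw [zpow_neg]; exact inv_mul_cancel₀ (zpow_ne_zero _ hB)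
    linear_combination (-(ε * f ((u:ℂ)*Complex.I) *
        ((N:ℂ)*((u:ℂ)*Complex.I))^α * ((N:ℂ)*((u:ℂ)*Complex.I))^(-α))) * eA
      + (-(ε * f ((u:ℂ)*Complex.I))) * eB
  rw [hfval]
  rcases Int.even_or_odd α with ⟨k, hk⟩ | hodd
  · have hα : (α:ℂ) = 2*(k:ℂ) := by rw [hk]; push_cast; ring
    rw [show (N:ℂ)*((u:ℂ)*Complex.I) = (((N:ℝ)*u : ℝ):ℂ) * Complex.I by push_cast; ring]
    rw [aux_zpow_pos_mul_I hNu, aux_cpow_pos_mul_I (inv_pos.mpr hNu) (s-1),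
      aux_cpow_pos_mul_I hu ((α:ℂ) - s - 1)]
    simp only [aux_cpow_nat hN]
    rw [Real.log_inv, Real.log_mul hNR.ne' hu.ne']
    rw [Complex.real_smul, Complex.real_smul]
    push_cast
    set LN : ℂ := Complex.log (N:ℂ) with hLN
    set LU : ℂ := ((Real.log u : ℝ) : ℂ) with hLU
    have hscal : Complex.exp ((LN + LU + ↑Real.pi/2*Complex.I) * (α:ℂ)) *
          Complex.exp ((-(LN+LU) + ↑Real.pi/2*Complex.I) * (s-1)) * (N:ℂ)
        = Complex.exp (LN * ((α:ℂ)/2)) * Complex.exp (↑Real.pi*Complex.I*(s-(α:ℂ))) *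
          Complex.exp (LN * ((α:ℂ)/2 - s)) *
          Complex.exp ((LU + ↑Real.pi/2*Complex.I)*((α:ℂ) - s - 1)) * ((N:ℂ)*(u:ℂ))^2 := by
      rw [show ((N:ℂ)*(u:ℂ))^2 = Complex.exp (LN + LU + (LN + LU)) by
        rw [Complex.exp_add, Complex.exp_add, Complex.exp_log hNC, aux_exp_log_real hu]; ring]
      rw [show (N:ℂ) = Complex.exp LN from (Complex.exp_log hNC).symm]
      rw [← Complex.exp_add, ← Complex.exp_add, ← Complex.exp_add, ← Complex.exp_add,
        ← Complex.exp_add, ← Complex.exp_add]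
      rw [show (LN + LU + ↑Real.pi/2*Complex.I) * (α:ℂ) +
            (-(LN+LU) + ↑Real.pi/2*Complex.I) * (s-1) + LN
          = LN * ((α:ℂ)/2) + ↑Real.pi*Complex.I*(s-(α:ℂ)) + LN * ((α:ℂ)/2 - s) +
            (LU + ↑Real.pi/2*Complex.I)*((α:ℂ) - s - 1) + (LN + LU + (LN + LU)) +
            (k:ℂ) * (2*↑Real.pi*Complex.I) by rw [hα]; ring]
      rw [Complex.exp_add, Complex.exp_int_mul_two_pi_mul_I, mul_one]
    have hx1 : ((N:ℂ)*(u:ℂ))^2 ≠ 0 := pow_ne_zero _ (mul_ne_zero hNC huC)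
    have hx2 : Complex.exp (LN * ((α:ℂ)/2)) ≠ 0 := Complex.exp_ne_zero _
    generalize hE1 : Complex.exp (LN * ((α:ℂ)/2)) = E1 at hscal hx2 ⊢
    generalize hE2 : Complex.exp ((LN + LU + ↑Real.pi/2*Complex.I) * (α:ℂ)) = E2 at hscal ⊢
    generalize hE3 : Complex.exp ((-(LN+LU) + ↑Real.pi/2*Complex.I) * (s-1)) = E3 at hscal ⊢
    generalize hE4 : Complex.exp ((LU + ↑Real.pi/2*Complex.I)*((α:ℂ) - s - 1)) = E4 at hscal ⊢
    generalize hE5 : Complex.exp (LN * ((α:ℂ)/2 - s)) = E5 at hscal ⊢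
    generalize hP : Complex.exp (↑Real.pi*Complex.I*(s-(α:ℂ))) = P at hscal ⊢
    field_simp
    have hscal' : E2 * E3 = E1 * P * E5 * E4 * (N:ℂ) * (u:ℂ)^2 :=
      mul_right_cancel₀ hNC (by linear_combination hscal)
    linear_combination (ε * f ((u:ℂ)*Complex.I)) * hscal'
  · have hz0 := aux_odd_vanish N hN α hodd ε hε f heigen hu
    simp [hz0]



/-- Fricke functional equation for eigenfunctions: if f|_α w_N = ε f
with ε = ±1 and f decays exponentially at i∞ and at 0 along the imaginary axis, then
Λ(s,f) = e^{iπ(s-α)} N^{α/2-s} ε Λ(α-s, f), where Λ(s,f) = ∫_{i∞}^0 f(z) z^{s-1} dz. -/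
theorem fricke_functional_equation_eigenform
    (N : ℕ) (hN : 0 < N) (α : ℤ) (ε : ℂ) (hε : ε = 1 ∨ ε = -1)
    (f : ℂ → ℂ) (hf : DifferentiableOn ℂ f {w : ℂ | 0 < w.im})
    (heigen : ∀ z : ℂ, 0 < z.im →
      ((N : ℂ)) ^ ((α : ℂ) / 2) * ((N : ℂ) * z) ^ (-α) * f (-1 / ((N : ℂ) * z)) = ε * f z)
    (hdecay : ∃ c C : ℝ, 0 < c ∧ 0 < C ∧ ∀ t : ℝ, 0 < t →
      ‖f ((t : ℂ) * Complex.I)‖ ≤ C * Real.exp (-c * t))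
    (hdecay0 : ∃ c C : ℝ, 0 < c ∧ 0 < C ∧ ∀ t : ℝ, 0 < t →
      ‖f ((t : ℂ) * Complex.I)‖ ≤ C * Real.exp (-c / t))
    (s : ℂ) :
    -(∫ t in Set.Ioi (0 : ℝ),
        f ((t : ℂ) * Complex.I) * ((t : ℂ) * Complex.I) ^ (s - 1) * Complex.I)
      = Complex.exp (Real.pi * Complex.I * (s - α)) * ((N : ℂ)) ^ ((α : ℂ) / 2 - s) * ε *
          -(∫ t in Set.Ioi (0 : ℝ),
              f ((t : ℂ) * Complex.I) * ((t : ℂ) * Complex.I) ^ ((α : ℂ) - s - 1) *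
                Complex.I) := by
  have hNR : (0:ℝ) < (N:ℝ) := Nat.cast_pos.mpr hN
  rw [mul_neg, neg_inj]
  have step1 : (∫ t in Set.Ioi (0:ℝ),
        f ((t : ℂ) * Complex.I) * ((t : ℂ) * Complex.I) ^ (s - 1) * Complex.I)
      = ∫ x in Set.Ioi (0:ℝ), (|(-1:ℝ)| * x ^ ((-1:ℝ) - 1)) •
          (fun t : ℝ => f ((t : ℂ) * Complex.I) * ((t : ℂ) * Complex.I) ^ (s - 1) * Complex.I)
            (x ^ (-1:ℝ)) :=
    (MeasureTheory.integral_comp_rpow_Ioi _ (by norm_num : (-1:ℝ) ≠ 0)).symm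
  rw [step1]
  have step2 : (∫ x in Set.Ioi (0:ℝ), (|(-1:ℝ)| * x ^ ((-1:ℝ) - 1)) •
          (fun t : ℝ => f ((t : ℂ) * Complex.I) * ((t : ℂ) * Complex.I) ^ (s - 1) * Complex.I)
            (x ^ (-1:ℝ)))
      = ∫ x in Set.Ioi (0:ℝ), ((x^2)⁻¹ : ℝ) •
          (f (((x⁻¹:ℝ) : ℂ) * Complex.I) * (((x⁻¹:ℝ) : ℂ) * Complex.I) ^ (s - 1) * Complex.I) := by
    refine MeasureTheory.setIntegral_congr_fun measurableSet_Ioi (fun x hx => ?_)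
    have hx' : (0:ℝ) < x := hx
    rw [show ((-1:ℝ) - 1) = ((-2:ℤ):ℝ) by norm_num, Real.rpow_intCast,
      show ((-1:ℝ)) = ((-1:ℤ):ℝ) by norm_num, Real.rpow_intCast]
    simp only [zpow_neg, zpow_one, zpow_two]
    norm_num [sq]
  rw [step2]
  have step3 : (∫ x in Set.Ioi (0:ℝ), ((x^2)⁻¹ : ℝ) •
          (f (((x⁻¹:ℝ) : ℂ) * Complex.I) * (((x⁻¹:ℝ) : ℂ) * Complex.I) ^ (s - 1) * Complex.I))
      = (N:ℝ) • ∫ u in Set.Ioi (0:ℝ), (((((N:ℝ)*u)^2)⁻¹ : ℝ) •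
          (f (((((N:ℝ)*u)⁻¹:ℝ) : ℂ) * Complex.I) *
            (((((N:ℝ)*u)⁻¹:ℝ) : ℂ) * Complex.I) ^ (s - 1) * Complex.I)) := by
    have h := MeasureTheory.integral_comp_mul_left_Ioi
      (fun x : ℝ => ((x^2)⁻¹ : ℝ) •
        (f (((x⁻¹:ℝ) : ℂ) * Complex.I) * (((x⁻¹:ℝ) : ℂ) * Complex.I) ^ (s - 1) * Complex.I))
      0 hNR
    rw [mul_zero] at h
    rw [h, smul_smul, mul_inv_cancel₀ hNR.ne', one_smul]
  rw [step3, ← MeasureTheory.integral_smul]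
  have step4 : (∫ u in Set.Ioi (0:ℝ), (N:ℝ) • ((((((N:ℝ)*u)^2)⁻¹ : ℝ)) •
          (f (((((N:ℝ)*u)⁻¹:ℝ) : ℂ) * Complex.I) *
            (((((N:ℝ)*u)⁻¹:ℝ) : ℂ) * Complex.I) ^ (s - 1) * Complex.I)))
      = ∫ u in Set.Ioi (0:ℝ), Complex.exp (Real.pi * Complex.I * (s - α)) *
          ((N : ℂ)) ^ ((α : ℂ) / 2 - s) * ε *
          (f ((u:ℂ) * Complex.I) * ((u:ℂ) * Complex.I) ^ ((α : ℂ) - s - 1) * Complex.I) := by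
    refine MeasureTheory.setIntegral_congr_fun measurableSet_Ioi (fun u hu => ?_)
    exact aux_key N hN α ε hε f heigen s hu
  rw [step4, MeasureTheory.integral_const_mul]
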